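/- Let p, q ∈ ℝ² with x_q ≤ x_p, and let y ∈ ℝ. The function x ↦ max{‖(x, y) − p‖, ‖(x, y) − q‖} attains its global infimum over ℝ at some x* ∈ [x_q, x_p]; in particular, inf_{x ∈ ℝ} max{‖(x, y) − p‖, ‖(x, y) − q‖} = inf_{x ∈ [x_q, x_p]} max{‖(x, y) − p‖, ‖(x, y) − q‖}. -/
import Mathlib


open Metric Set

noncomputable section

/-- Points of the Euclidean plane ℝ². -/
abbrev Pt : Type := EuclideanSpace ℝ (Fin 2)

/-- The point (x, y) ∈ ℝ². -/
def pt (x y : ℝ) : Pt := (WithLp.equiv 2 (Fin 2 → ℝ)).symm ![x, y]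

/-- The leftward horizontal halfline ←p = {(x, y_p) : x ≤ x_p}. -/
def leftRay (p : Pt) : Set Pt := {z : Pt | z 1 = p 1 ∧ z 0 ≤ p 0}

/-- The rightward horizontal halfline →p = {(x, y_p) : x ≥ x_p}. -/
def rightRay (p : Pt) : Set Pt := {z : Pt | z 1 = p 1 ∧ p 0 ≤ z 0}

/-- h_{←p}(q): Euclidean distance from q to the leftward halfline at p. -/
def hL (p q : Pt) : ℝ := infDist q (leftRay p)

/-- h_{→p}(q): Euclidean distance from q to the rightward halfline at p. -/
def hR (p q : Pt) : ℝ := infDist q (rightRay p)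

/-- h_{←S}(q) = max_{p ∈ S} h_{←p}(q). -/
def hLS (S : Finset Pt) (hS : S.Nonempty) (q : Pt) : ℝ := S.sup' hS fun p => hL p q

/-- h_{→S}(q) = max_{p ∈ S} h_{→p}(q). -/
def hRS (S : Finset Pt) (hS : S.Nonempty) (q : Pt) : ℝ := S.sup' hS fun p => hR p q

/-- δ_{pq}(y) = inf_x max{‖(x,y) − p‖, ‖(x,y) − q‖}. -/
def delta (p q : Pt) (y : ℝ) : ℝ := ⨅ x : ℝ, max ‖pt x y - p‖ ‖pt x y - q‖

/-- δ'_{pq}(y) = inf_x max{h_{←q}((x,y)), h_{→p}((x,y))}. -/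
def delta' (p q : Pt) (y : ℝ) : ℝ := ⨅ x : ℝ, max (hL q (pt x y)) (hR p (pt x y))


lemma norm_pt (a y : ℝ) (p : Pt) :
    ‖pt a y - p‖ = Real.sqrt ((a - p 0)^2 + (y - p 1)^2) := by
  rw [EuclideanSpace.norm_eq]
  simp [pt, Fin.sum_univ_two, sq_abs]

lemma norm_pt_mono {a b y : ℝ} (p : Pt) (hab : |a - p 0| ≤ |b - p 0|) :
    ‖pt a y - p‖ ≤ ‖pt b y - p‖ := by
  rw [norm_pt, norm_pt]
  apply Real.sqrt_le_sqrt
  have : (a - p 0)^2 ≤ (b - p 0)^2 := by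
    rw [← sq_abs (a - p 0), ← sq_abs (b - p 0)]
    exact pow_le_pow_left₀ (abs_nonneg _) hab 2
  linarith

theorem stmt_5 (p q : Pt) (h : q 0 ≤ p 0) (y : ℝ) :
    (∃ xs : ℝ, xs ∈ Set.Icc (q 0) (p 0) ∧
      ∀ x : ℝ, max ‖pt xs y - p‖ ‖pt xs y - q‖ ≤ max ‖pt x y - p‖ ‖pt x y - q‖) ∧
    (⨅ x : ℝ, max ‖pt x y - p‖ ‖pt x y - q‖) =
      ⨅ x : Set.Icc (q 0) (p 0), max ‖pt x.1 y - p‖ ‖pt x.1 y - q‖ := by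
  set f : ℝ → ℝ := fun x => max ‖pt x y - p‖ ‖pt x y - q‖ with hf
  have hcont : Continuous f := by
    have : ∀ r : Pt, Continuous fun x => ‖pt x y - r‖ := by
      intro r
      simp only [norm_pt]
      fun_prop
    exact (this p).max (this q)
  -- clamp
  have key : ∀ x : ℝ, f (max (q 0) (min x (p 0))) ≤ f x := by
    intro x
    set c := max (q 0) (min x (p 0)) with hc
    have hc1 : |c - p 0| ≤ |x - p 0| := by
      rcases le_total x (q 0) with hx | hx
      · have : c = q 0 := by rw [hc]; rw [max_eq_left]; exact min_le_of_left_le hx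
        rw [this]
        rw [abs_sub_comm (q 0), abs_sub_comm x, abs_of_nonneg (by linarith), abs_of_nonneg (by linarith)]
        linarith
      · rcases le_total x (p 0) with hx2 | hx2
        · have : c = x := by rw [hc, min_eq_left hx2, max_eq_right hx]
          rw [this]
        · have : c = p 0 := by rw [hc, min_eq_right hx2, max_eq_right h]
          rw [this]; simp [abs_nonneg]
    have hc2 : |c - q 0| ≤ |x - q 0| := by
      rcases le_total x (q 0) with hx | hx
      · have : c = q 0 := by rw [hc]; rw [max_eq_left]; exact min_le_of_left_le hx
        rw [this]; simp [abs_nonneg]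
      · rcases le_total x (p 0) with hx2 | hx2
        · have : c = x := by rw [hc, min_eq_left hx2, max_eq_right hx]
          rw [this]
        · have : c = p 0 := by rw [hc, min_eq_right hx2, max_eq_right h]
          rw [this, abs_of_nonneg (by linarith), abs_of_nonneg (by linarith)]
          linarith
    exact max_le_max (norm_pt_mono p hc1) (norm_pt_mono q hc2)
  have hIcc : (Set.Icc (q 0) (p 0)).Nonempty := Set.nonempty_Icc.mpr h
  obtain ⟨xs, hxs, hmin⟩ := isCompact_Icc.exists_isMinOn hIcc (hcont.continuousOn)
  have hglob : ∀ x : ℝ, f xs ≤ f x := by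
    intro x
    have hcmem : max (q 0) (min x (p 0)) ∈ Set.Icc (q 0) (p 0) := by
      constructor
      · exact le_max_left _ _
      · exact max_le h (min_le_right _ _)
    exact le_trans (hmin hcmem) (key x)
  refine ⟨⟨xs, hxs, hglob⟩, ?_⟩
  haveI : Nonempty ↑(Set.Icc (q 0) (p 0)) := hIcc.to_subtype
  have hf0 : ∀ x : ℝ, (0:ℝ) ≤ f x := fun x => le_max_of_le_left (norm_nonneg _)
  have hbdd : BddBelow (Set.range f) := ⟨0, by rintro _ ⟨x, rfl⟩; exact hf0 x⟩
  have hbdd2 : BddBelow (Set.range fun x : Set.Icc (q 0) (p 0) => f x.1) :=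
    ⟨0, by rintro _ ⟨x, rfl⟩; exact hf0 x.1⟩
  apply le_antisymm
  · exact le_ciInf fun x => ciInf_le hbdd x.1
  · have h1 : (⨅ x : Set.Icc (q 0) (p 0), f x.1) ≤ f xs := ciInf_le hbdd2 ⟨xs, hxs⟩
    have h2 : f xs ≤ ⨅ x : ℝ, f x := le_ciInf hglob
    linarith
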